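/- Let the coin have P(H) = p with 0 < p < 1. The probability that HTH occurs before TTH equals (R_B(B) − R_B(A)) / (R_A(A) − R_A(B) + R_B(B) − R_B(A)) where A = HTH, B = TTH, R_A(A) = 1/(p²(1−p)) + 1/p, R_A(B) = 0, R_B(B) = 1/(p(1−p)²), R_B(A) = 1/p; in particular for p = 3/4 this probability is 45/64. -/

import Mathlib

open MeasureTheory ProbabilityTheory
open scoped ENNReal

/-- The pattern `P` occurs at time `n` (i.e. within the first `n` draws
`x 0, …, x (n-1)`, as the final block of `P.length` consecutive draws). -/
def occursAt {α : Type*} (P : List α) (x : ℕ → α) (n : ℕ) : Prop :=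
  P.length ≤ n ∧ ∀ i (h : i < P.length), x (n - P.length + i) = P.get ⟨i, h⟩

/-- The first time at which the pattern `P` occurs (`∞` if it never occurs). -/
noncomputable def hitTime {α : Type*} (P : List α) (x : ℕ → α) : ℝ≥0∞ :=
  sInf ((fun n : ℕ => (n : ℝ≥0∞)) '' {n | occursAt P x n})

/-- The Bernoulli `PMF` with an `ℝ≥0∞` parameter (the old `PMF.bernoulli`). -/
noncomputable def bernoulliENNReal (p : ℝ≥0∞) (h : p ≤ 1) : PMF Bool :=
  PMF.ofFintype (fun b => cond b p (1 - p)) (by simp [h])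

/-- The fair-coin distribution on `Bool` (`true` = heads `H`, `false` = tails `T`). -/
noncomputable def fairCoin : Measure Bool := (bernoulliENNReal (1/2) (by norm_num)).toMeasure

lemma occursAt_three {α : Type*} (b0 b1 b2 : α) (x : ℕ → α) (n : ℕ) :
    occursAt [b0, b1, b2] x n ↔
      3 ≤ n ∧ x (n - 3) = b0 ∧ x (n - 2) = b1 ∧ x (n - 1) = b2 := by
  constructor
  · rintro ⟨hn, h⟩
    simp only [List.length] at hn h
    refine ⟨hn, ?_, ?_, ?_⟩
    · simpa using h 0 (by norm_num)
    · have := h 1 (by norm_num)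
      simpa [show n - 3 + 1 = n - 2 by omega] using this
    · have := h 2 (by norm_num)
      simpa [show n - 3 + 2 = n - 1 by omega] using this
  · rintro ⟨hn, h0, h1, h2⟩
    refine ⟨by simpa using hn, ?_⟩
    intro i hi
    simp only [List.length] at hi
    interval_cases i
    · simpa using h0
    · simpa [show n - 3 + 1 = n - 2 by omega] using h1
    · simpa [show n - 3 + 2 = n - 1 by omega] using h2

lemma hitTime_le {α : Type*} {P : List α} {x : ℕ → α} {n : ℕ} (h : occursAt P x n) :
    hitTime P x ≤ n := sInf_le ⟨n, h, rfl⟩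

lemma le_hitTime {α : Type*} {P : List α} {x : ℕ → α} {c : ℕ}
    (h : ∀ m, occursAt P x m → c ≤ m) : (c : ℝ≥0∞) ≤ hitTime P x := by
  refine le_sInf ?_
  rintro b ⟨m, hm, rfl⟩
  simp only []
  exact_mod_cast h m hm

lemma hitTime_eq_top {α : Type*} {P : List α} {x : ℕ → α}
    (h : ∀ m, ¬ occursAt P x m) : hitTime P x = ⊤ := by
  have : {n | occursAt P x n} = ∅ := by ext m; simp [h m]
  simp [hitTime, this]

def winC (a : ℕ) (x : ℕ → Bool) : Prop :=
  (∀ i ≤ a, x i = true) ∧ x (a+1) = false ∧ x (a+2) = true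

def winD (a : ℕ) (x : ℕ → Bool) : Prop :=
  x 0 = false ∧ (∀ i, 1 ≤ i → i ≤ a+1 → x i = true) ∧ x (a+2) = false ∧ x (a+3) = true

lemma hit_iff (x : ℕ → Bool) :
    hitTime [true, false, true] x < hitTime [false, false, true] x ↔
      ∃ a : ℕ, winC a x ∨ winD a x := by
  constructor
  · intro h
    classical
    have hex : ∃ n, occursAt [true, false, true] x n := by
      by_contra hc
      push_neg at hc
      rw [hitTime_eq_top hc] at h
      exact absurd h (by simp)
    set n := Nat.find hex with hn
    have hnA : occursAt [true, false, true] x n := Nat.find_spec hex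
    have hmin : ∀ m, occursAt [true, false, true] x m → n ≤ m :=
      fun m hm => Nat.find_min' hex hm
    have hB : ∀ m, m ≤ n → ¬ occursAt [false, false, true] x m := by
      intro m hm hBm
      have h1 : (n : ℝ≥0∞) ≤ hitTime [true, false, true] x := le_hitTime hmin
      have h2 : hitTime [false, false, true] x ≤ m := hitTime_le hBm
      have : (n : ℝ≥0∞) < m := lt_of_le_of_lt h1 (lt_of_lt_of_le h h2)
      have := Nat.cast_lt.mp this
      omega
    rw [occursAt_three] at hnA
    obtain ⟨hn3, hA0, hA1, hA2⟩ := hnA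
    -- no two consecutive tails strictly inside the prefix
    have hTTaux : ∀ k i, x i = false → x (i+1) = false → i + 1 + k ≤ n - 1 →
        x (i + k) = false ∧ x (i + 1 + k) = false := by
      intro k
      induction k with
      | zero => intro i h0 h1 _; simpa using ⟨h0, h1⟩
      | succ k ih =>
        intro i h0 h1 hk
        obtain ⟨p0, p1⟩ := ih i h0 h1 (by omega)
        have hx2 : x (i + k + 2) = false := by
          cases hx : x (i + k + 2) with
          | false => rfl
          | true =>
            exfalso
            refine hB (i + k + 3) (by omega) ?_
            rw [occursAt_three]
            refine ⟨by omega, ?_, ?_, ?_⟩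
            · simpa [show i + k + 3 - 3 = i + k by omega] using p0
            · simpa [show i + k + 3 - 2 = i + 1 + k by omega] using p1
            · simpa [show i + k + 3 - 1 = i + k + 2 by omega] using hx
        constructor
        · simpa [show i + (k+1) = i + 1 + k by omega] using p1
        · simpa [show i + 1 + (k+1) = i + k + 2 by omega] using hx2
    have hTT : ∀ i, i + 1 ≤ n - 1 → x i = false → x (i+1) = false → False := by
      intro i hi h0 h1
      obtain ⟨_, p1⟩ := hTTaux (n - 1 - (i+1)) i h0 h1 (by omega)
      rw [show i + 1 + (n - 1 - (i+1)) = n - 1 by omega] at p1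
      rw [hA2] at p1
      exact Bool.true_eq_false.mp p1
    -- every inner position is heads
    have hstep2 : ∀ j, 1 ≤ j → j + 2 < n → x j = true := by
      intro j hj1 hj2
      cases hxj : x j with
      | true => rfl
      | false =>
        exfalso
        have hm1 : x (j - 1) = true := by
          cases hx : x (j - 1) with
          | true => rfl
          | false =>
            exact absurd (hTT (j-1) (by omega)
              (hx) (by simpa [show j - 1 + 1 = j by omega] using hxj)) (by simp)
        have hp1 : x (j + 1) = true := by
          cases hx : x (j + 1) with
          | true => rfl
          | false => exact absurd (hTT j (by omega) hxj hx) (by simp)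
        have : occursAt [true, false, true] x (j + 2) := by
          rw [occursAt_three]
          refine ⟨by omega, ?_, ?_, ?_⟩
          · simpa [show j + 2 - 3 = j - 1 by omega] using hm1
          · simpa [show j + 2 - 2 = j by omega] using hxj
          · simpa [show j + 2 - 1 = j + 1 by omega] using hp1
        have := hmin _ this
        omega
    cases hx0 : x 0 with
    | true =>
      refine ⟨n - 3, Or.inl ⟨?_, ?_, ?_⟩⟩
      · intro i hi
        rcases Nat.eq_zero_or_pos i with h | h
        · subst h; exact hx0
        · rcases eq_or_lt_of_le hi with h' | h'
          · subst h'; exact hA0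
          · exact hstep2 i h (by omega)
      · simpa [show n - 3 + 1 = n - 2 by omega] using hA1
      · simpa [show n - 3 + 2 = n - 1 by omega] using hA2
    | false =>
      have hn4 : 4 ≤ n := by
        rcases eq_or_lt_of_le hn3 with h' | h'
        · exfalso; rw [← h'] at hA0; simp only [show (3:ℕ) - 3 = 0 from rfl, hx0] at hA0
          simp at hA0
        · omega
      refine ⟨n - 4, Or.inr ⟨hx0, ?_, ?_, ?_⟩⟩
      · intro i hi1 hi2
        rcases eq_or_lt_of_le hi2 with h' | h'
        · rw [h']; simpa [show n - 4 + 1 = n - 3 by omega] using hA0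
        · exact hstep2 i hi1 (by omega)
      · simpa [show n - 4 + 2 = n - 2 by omega] using hA1
      · simpa [show n - 4 + 3 = n - 1 by omega] using hA2
  · rintro ⟨a, hC | hD⟩
    · obtain ⟨hH, hT, hH2⟩ := hC
      have hA : occursAt [true, false, true] x (a + 3) := by
        rw [occursAt_three]
        exact ⟨by omega, by simpa [show a + 3 - 3 = a by omega] using hH a le_rfl,
          by simpa [show a + 3 - 2 = a + 1 by omega] using hT,
          by simpa [show a + 3 - 1 = a + 2 by omega] using hH2⟩
      have h1 : hitTime [true, false, true] x ≤ (a + 3 : ℕ) := hitTime_le hA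
      have h2 : ((a + 4 : ℕ) : ℝ≥0∞) ≤ hitTime [false, false, true] x := by
        refine le_hitTime ?_
        intro m hm
        rw [occursAt_three] at hm
        obtain ⟨hm3, b0, b1, _⟩ := hm
        by_contra hlt
        push_neg at hlt
        have hc1 : m - 2 ≤ a + 1 := by omega
        rcases eq_or_lt_of_le hc1 with h' | h'
        · rw [show m - 3 = a by omega, hH a le_rfl] at b0; simp at b0
        · rw [hH (m-2) (by omega)] at b1; simp at b1
      calc hitTime [true, false, true] x ≤ ((a + 3 : ℕ) : ℝ≥0∞) := h1
        _ < ((a + 4 : ℕ) : ℝ≥0∞) := by exact_mod_cast Nat.lt_succ_self _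
        _ ≤ hitTime [false, false, true] x := h2
    · obtain ⟨h0, hH, hT, hH2⟩ := hD
      have hA : occursAt [true, false, true] x (a + 4) := by
        rw [occursAt_three]
        exact ⟨by omega, by simpa [show a + 4 - 3 = a + 1 by omega] using hH (a+1) (by omega) le_rfl,
          by simpa [show a + 4 - 2 = a + 2 by omega] using hT,
          by simpa [show a + 4 - 1 = a + 3 by omega] using hH2⟩
      have h1 : hitTime [true, false, true] x ≤ (a + 4 : ℕ) := hitTime_le hA
      have h2 : ((a + 5 : ℕ) : ℝ≥0∞) ≤ hitTime [false, false, true] x := by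
        refine le_hitTime ?_
        intro m hm
        rw [occursAt_three] at hm
        obtain ⟨hm3, b0, b1, _⟩ := hm
        by_contra hlt
        push_neg at hlt
        have hc1 : m - 2 ≤ a + 2 := by omega
        rcases eq_or_lt_of_le hc1 with h' | h'
        · rw [hH (m-3) (by omega) (by omega)] at b0; simp at b0
        · rw [hH (m-2) (by omega) (by omega)] at b1; simp at b1
      calc hitTime [true, false, true] x ≤ ((a + 4 : ℕ) : ℝ≥0∞) := h1
        _ < ((a + 5 : ℕ) : ℝ≥0∞) := by exact_mod_cast Nat.lt_succ_self _
        _ ≤ hitTime [false, false, true] x := h2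


lemma arith (p : ℝ≥0∞) (hp0 : p ≠ 0) (hp1 : p < 1) :
    ((p * (1 - p) ^ 2)⁻¹ - p⁻¹) /
        (((p ^ 2 * (1 - p))⁻¹ + p⁻¹) - 0 + (p * (1 - p) ^ 2)⁻¹ - p⁻¹)
      = p ^ 2 + p ^ 2 * (1 - p) := by
  set q : ℝ≥0∞ := 1 - p with hq
  have hpt : p ≠ ∞ := hp1.ne_top
  have hq0 : q ≠ 0 := fun h => absurd (tsub_eq_zero_iff_le.mp h) hp1.not_ge
  have hqt : q ≠ ∞ := ne_top_of_le_ne_top ENNReal.one_ne_top tsub_le_self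
  have hpq : q + p = 1 := tsub_add_cancel_of_le hp1.le
  have hqq : q * q⁻¹ = 1 := ENNReal.mul_inv_cancel hq0 hqt
  have hpp : p * p⁻¹ = 1 := ENNReal.mul_inv_cancel hp0 hpt
  have hA0 : p * q ^ 2 ≠ 0 := mul_ne_zero hp0 (pow_ne_zero 2 hq0)
  have hAt : p * q ^ 2 ≠ ∞ := ENNReal.mul_ne_top hpt (ENNReal.pow_ne_top hqt)
  have hB0 : p ^ 2 * q ≠ 0 := mul_ne_zero (pow_ne_zero 2 hp0) hq0
  have hBt : p ^ 2 * q ≠ ∞ := ENNReal.mul_ne_top (ENNReal.pow_ne_top hpt) hqt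
  have hAA : (p * q ^ 2) * (p * q ^ 2)⁻¹ = 1 := ENNReal.mul_inv_cancel hA0 hAt
  have hBB : (p ^ 2 * q) * (p ^ 2 * q)⁻¹ = 1 := ENNReal.mul_inv_cancel hB0 hBt
  have hD : ((p ^ 2 * q)⁻¹ + p⁻¹) - 0 + (p * q ^ 2)⁻¹ - p⁻¹
      = (p ^ 2 * q)⁻¹ + (p * q ^ 2)⁻¹ := by
    rw [tsub_zero]
    have h : (p ^ 2 * q)⁻¹ + p⁻¹ + (p * q ^ 2)⁻¹
        = ((p ^ 2 * q)⁻¹ + (p * q ^ 2)⁻¹) + p⁻¹ := by ring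
    rw [h, ENNReal.add_sub_cancel_right (ENNReal.inv_ne_top.mpr hp0)]
  have hN : (p * q ^ 2)⁻¹ - p⁻¹ = (1 + q) * (q⁻¹ * q⁻¹) := by
    apply ENNReal.sub_eq_of_eq_add (ENNReal.inv_ne_top.mpr hp0)
    rw [← ENNReal.mul_right_inj hA0 hAt, hAA]
    have h : p * q ^ 2 * ((1 + q) * (q⁻¹ * q⁻¹) + p⁻¹)
        = (1 + q) * ((q * q⁻¹) * (q * q⁻¹)) * p + (p * p⁻¹) * q ^ 2 := by ring
    rw [h, hqq, hpp]
    have h2 : (1 + q) * (1 * 1) * p + 1 * q ^ 2 = p + q * (q + p) := by ring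
    rw [h2, hpq, mul_one, ← hpq, add_comm]
  rw [hD, hN]
  have hD0 : (p ^ 2 * q)⁻¹ + (p * q ^ 2)⁻¹ ≠ 0 := by
    simp [ENNReal.inv_ne_zero, hBt, hAt]
  have hDt : (p ^ 2 * q)⁻¹ + (p * q ^ 2)⁻¹ ≠ ∞ := by
    simp [ENNReal.add_ne_top, ENNReal.inv_ne_top, hB0, hA0]
  symm
  rw [ENNReal.eq_div_iff hD0 hDt]
  -- ⊢ D * (p^2 + p^2*q) = (1+q)*(q⁻¹*q⁻¹)
  rw [← ENNReal.mul_right_inj (a := p ^ 2 * q ^ 2)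
    (mul_ne_zero (pow_ne_zero 2 hp0) (pow_ne_zero 2 hq0))
    (ENNReal.mul_ne_top (ENNReal.pow_ne_top hpt) (ENNReal.pow_ne_top hqt))]
  have h1 : p ^ 2 * q ^ 2 * (((p ^ 2 * q)⁻¹ + (p * q ^ 2)⁻¹) * (p ^ 2 + p ^ 2 * q))
      = ((p ^ 2 * q) * (p ^ 2 * q)⁻¹ * q + (p * q ^ 2) * (p * q ^ 2)⁻¹ * p)
        * (p ^ 2 + p ^ 2 * q) := by ring
  have h2 : p ^ 2 * q ^ 2 * ((1 + q) * (q⁻¹ * q⁻¹))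
      = (1 + q) * p ^ 2 * ((q * q⁻¹) * (q * q⁻¹)) := by ring
  rw [h1, h2, hAA, hBB, hqq, one_mul, one_mul, hpq]
  ring


lemma num34 : ((3/4 : ℝ≥0∞)) ^ 2 + (3/4 : ℝ≥0∞) ^ 2 * (1 - 3/4) = 45/64 := by
  have h4 : (4 : ℝ≥0∞) ≠ 0 := by norm_num
  have h4t : (4 : ℝ≥0∞) ≠ ⊤ := by norm_num
  have h34 : (3/4 : ℝ≥0∞) ≠ ⊤ := by
    simp [ENNReal.div_eq_top, h4, h4t]
  have h14 : (1/4 : ℝ≥0∞) ≠ ⊤ := by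
    simp [ENNReal.div_eq_top, h4, h4t]
  have h : (1 : ℝ≥0∞) - 3/4 = 1/4 := by
    apply ENNReal.sub_eq_of_eq_add h34
    rw [ENNReal.div_add_div_same]
    norm_num
    rw [ENNReal.div_self] <;> norm_num
  have hsq : ((3/4 : ℝ≥0∞)) ^ 2 ≠ ⊤ := ENNReal.pow_ne_top h34
  rw [h]
  rw [← ENNReal.toReal_eq_toReal_iff' (ENNReal.add_ne_top.mpr ⟨hsq, ENNReal.mul_ne_top hsq h14⟩)
    (by simp [ENNReal.div_eq_top])]
  rw [ENNReal.toReal_add hsq (ENNReal.mul_ne_top hsq h14)]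
  simp only [ENNReal.toReal_div, ENNReal.toReal_mul, ENNReal.toReal_pow, ENNReal.toReal_ofNat,
    ENNReal.toReal_one]
  norm_num

/-- main measure computation, modulo the identification of the winning event -/
lemma measure_win {Ω : Type*} [MeasurableSpace Ω] (μ : Measure Ω) [IsProbabilityMeasure μ]
    (p : ℝ≥0∞) (hp0 : 0 < p) (hp1 : p < 1)
    (X : ℕ → Ω → Bool) (hmeas : ∀ n, Measurable (X n))
    (hindep : iIndepFun X μ)
    (hlaw : ∀ n, μ.map (X n) = (bernoulliENNReal p hp1.le).toMeasure) :
    μ ((⋃ a : ℕ, {ω | winC a fun n => X n ω}) ∪ ⋃ a : ℕ, {ω | winD a fun n => X n ω})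
      = p ^ 2 + p ^ 2 * (1 - p) := by
  set q : ℝ≥0∞ := 1 - p with hq
  have hq0 : q ≠ 0 := fun h => absurd (tsub_eq_zero_iff_le.mp h) hp1.not_ge
  have hqt : q ≠ ∞ := ne_top_of_le_ne_top ENNReal.one_ne_top tsub_le_self
  have hqq : q * q⁻¹ = 1 := ENNReal.mul_inv_cancel hq0 hqt
  have hcoord : ∀ (i : ℕ) (b : Bool), μ (X i ⁻¹' {b}) = cond b p q := by
    intro i b
    rw [← Measure.map_apply (hmeas i) (measurableSet_singleton b), hlaw i,
      PMF.toMeasure_apply_singleton _ b (measurableSet_singleton b), bernoulliENNReal, PMF.ofFintype_apply]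
  set bC : ℕ → ℕ → Bool := fun a i => if i = a+1 then false else true with hbC
  set bD : ℕ → ℕ → Bool := fun a i => if i = 0 ∨ i = a+2 then false else true with hbD
  have hCeq : ∀ a : ℕ, {ω | winC a fun n => X n ω}
      = ⋂ i ∈ Finset.range (a+3), X i ⁻¹' {bC a i} := by
    intro a
    ext ω
    simp only [Set.mem_setOf_eq, Set.mem_iInter, Finset.mem_range, Set.mem_preimage,
      Set.mem_singleton_iff, winC, hbC]
    constructor
    · rintro ⟨h1, h2, h3⟩ i hi
      by_cases hia : i = a+1
      · subst hia; simpa using h2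
      · rw [if_neg hia]
        have : i ≤ a ∨ i = a + 2 := by omega
        rcases this with h | h
        · exact h1 i h
        · subst h; exact h3
    · intro h
      refine ⟨fun i hi => ?_, ?_, ?_⟩
      · have := h i (by omega); rwa [if_neg (by omega)] at this
      · have := h (a+1) (by omega); rwa [if_pos rfl] at this
      · have := h (a+2) (by omega); rwa [if_neg (by omega)] at this
  have hDeq : ∀ a : ℕ, {ω | winD a fun n => X n ω}
      = ⋂ i ∈ Finset.range (a+4), X i ⁻¹' {bD a i} := by
    intro a
    ext ω
    simp only [Set.mem_setOf_eq, Set.mem_iInter, Finset.mem_range, Set.mem_preimage,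
      Set.mem_singleton_iff, winD, hbD]
    constructor
    · rintro ⟨h0, h1, h2, h3⟩ i hi
      by_cases hia : i = 0 ∨ i = a+2
      · rw [if_pos hia]; rcases hia with h | h
        · subst h; exact h0
        · subst h; exact h2
      · rw [if_neg hia]
        push_neg at hia
        have : (1 ≤ i ∧ i ≤ a + 1) ∨ i = a + 3 := by omega
        rcases this with ⟨ha, hb⟩ | h
        · exact h1 i ha hb
        · subst h; exact h3
    · intro h
      refine ⟨?_, fun i hi1 hi2 => ?_, ?_, ?_⟩
      · have := h 0 (by omega); rwa [if_pos (Or.inl rfl)] at this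
      · have := h i (by omega); rwa [if_neg (by omega)] at this
      · have := h (a+2) (by omega); rwa [if_pos (Or.inr rfl)] at this
      · have := h (a+3) (by omega); rwa [if_neg (by omega)] at this
  have hCms : ∀ a, MeasurableSet {ω | winC a fun n => X n ω} := by
    intro a
    rw [hCeq]
    exact MeasurableSet.biInter (Finset.range _).countable_toSet
      fun i _ => hmeas i (measurableSet_singleton _)
  have hDms : ∀ a, MeasurableSet {ω | winD a fun n => X n ω} := by
    intro a
    rw [hDeq]
    exact MeasurableSet.biInter (Finset.range _).countable_toSet
      fun i _ => hmeas i (measurableSet_singleton _)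
  -- measure of the C cylinders
  have hμC : ∀ a, μ {ω | winC a fun n => X n ω} = q * p ^ (a + 2) := by
    intro a
    rw [hCeq]
    rw [hindep.measure_inter_preimage_eq_mul (Finset.range (a+3))
      (fun i _ => measurableSet_singleton _)]
    have hmem : a + 1 ∈ Finset.range (a+3) := by simp
    rw [← Finset.mul_prod_erase (Finset.range (a+3)) _ hmem]
    have hrest : ∀ i ∈ (Finset.range (a+3)).erase (a+1),
        μ (X i ⁻¹' {bC a i}) = p := by
      intro i hi
      rw [hcoord]
      simp [hbC, (Finset.mem_erase.mp hi).1]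
    rw [Finset.prod_congr rfl hrest, Finset.prod_const,
      Finset.card_erase_of_mem hmem, Finset.card_range, hcoord]
    simp [hbC]
  have hμD : ∀ a, μ {ω | winD a fun n => X n ω} = q * (q * p ^ (a + 2)) := by
    intro a
    rw [hDeq]
    rw [hindep.measure_inter_preimage_eq_mul (Finset.range (a+4))
      (fun i _ => measurableSet_singleton _)]
    have hmem0 : 0 ∈ Finset.range (a+4) := by simp
    have hmem2 : a + 2 ∈ (Finset.range (a+4)).erase 0 := by
      simp [Finset.mem_erase]
    rw [← Finset.mul_prod_erase (Finset.range (a+4)) _ hmem0,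
      ← Finset.mul_prod_erase _ _ hmem2]
    have hrest : ∀ i ∈ ((Finset.range (a+4)).erase 0).erase (a+2),
        μ (X i ⁻¹' {bD a i}) = p := by
      intro i hi
      have h1 := Finset.mem_erase.mp hi
      have h2 := Finset.mem_erase.mp h1.2
      rw [hcoord]
      simp [hbD, h1.1, h2.1]
    rw [Finset.prod_congr rfl hrest, Finset.prod_const,
      Finset.card_erase_of_mem hmem2, Finset.card_erase_of_mem hmem0, Finset.card_range,
      hcoord, hcoord]
    simp only [hbD]
    norm_num
  -- disjointness
  have hdisjC : Pairwise (Function.onFun Disjoint fun a => {ω | winC a fun n => X n ω}) := by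
    have key : ∀ a b : ℕ, a < b →
        Disjoint {ω | winC a fun n => X n ω} {ω | winC b fun n => X n ω} := by
      intro a b hab
      rw [Set.disjoint_left]
      intro ω hA hB
      have h1 : X (a+1) ω = false := hA.2.1
      have h2 : X (a+1) ω = true := hB.1 (a+1) (by omega)
      rw [h1] at h2; exact absurd h2 (by simp)
    intro a b hab
    rcases hab.lt_or_gt with h | h
    · exact key a b h
    · exact (key b a h).symm
  have hdisjD : Pairwise (Function.onFun Disjoint fun a => {ω | winD a fun n => X n ω}) := by
    have key : ∀ a b : ℕ, a < b →
        Disjoint {ω | winD a fun n => X n ω} {ω | winD b fun n => X n ω} := by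
      intro a b hab
      rw [Set.disjoint_left]
      intro ω hA hB
      have h1 : X (a+2) ω = false := hA.2.2.1
      have h2 : X (a+2) ω = true := hB.2.1 (a+2) (by omega) (by omega)
      rw [h1] at h2; exact absurd h2 (by simp)
    intro a b hab
    rcases hab.lt_or_gt with h | h
    · exact key a b h
    · exact (key b a h).symm
  have hdisjCD : Disjoint (⋃ a : ℕ, {ω | winC a fun n => X n ω})
      (⋃ a : ℕ, {ω | winD a fun n => X n ω}) := by
    rw [Set.disjoint_left]
    intro ω hA hB
    obtain ⟨_, ⟨a, rfl⟩, hA⟩ := hA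
    obtain ⟨_, ⟨b, rfl⟩, hB⟩ := hB
    have h1 : X 0 ω = true := hA.1 0 (Nat.zero_le a)
    have h2 : X 0 ω = false := hB.1
    rw [h1] at h2; exact absurd h2 (by simp)
  rw [measure_union hdisjCD (MeasurableSet.iUnion hDms),
    measure_iUnion hdisjC hCms, measure_iUnion hdisjD hDms,
    tsum_congr hμC, tsum_congr hμD]
  have hsum1 : ∑' a : ℕ, q * p ^ (a + 2) = p ^ 2 := by
    have h : ∀ a : ℕ, q * p ^ (a + 2) = (q * p ^ 2) * p ^ a := by
      intro a; rw [pow_add]; ring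
    rw [tsum_congr h, ENNReal.tsum_mul_left, ENNReal.tsum_geometric, ← hq]
    calc q * p ^ 2 * q⁻¹ = p ^ 2 * (q * q⁻¹) := by ring
      _ = p ^ 2 := by rw [hqq, mul_one]
  have hsum2 : ∑' a : ℕ, q * (q * p ^ (a + 2)) = p ^ 2 * q := by
    have h : ∀ a : ℕ, q * (q * p ^ (a + 2)) = (q * q * p ^ 2) * p ^ a := by
      intro a; rw [pow_add]; ring
    rw [tsum_congr h, ENNReal.tsum_mul_left, ENNReal.tsum_geometric, ← hq]
    calc q * q * p ^ 2 * q⁻¹ = q * p ^ 2 * (q * q⁻¹) := by ring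
      _ = p ^ 2 * q := by rw [hqq, mul_one]; ring
  rw [hsum1, hsum2]


/-- For a coin with P(H) = p ∈ (0,1) and A = HTH, B = TTH:
P(A before B) = (R_B(B) − R_B(A)) / (R_A(A) − R_A(B) + R_B(B) − R_B(A)), where
R_A(A) = 1/(p²(1−p)) + 1/p, R_A(B) = 0, R_B(B) = 1/(p(1−p)²), R_B(A) = 1/p;
in particular for p = 3/4 this probability is 45/64. -/
theorem stmt_9 (p : ℝ≥0∞) (hp0 : 0 < p) (hp1 : p < 1)
    {Ω : Type*} [MeasurableSpace Ω] (μ : Measure Ω) [IsProbabilityMeasure μ]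
    (X : ℕ → Ω → Bool) (hmeas : ∀ n, Measurable (X n))
    (hindep : iIndepFun X μ)
    (hlaw : ∀ n, μ.map (X n) = (bernoulliENNReal p hp1.le).toMeasure) :
    (μ {ω | hitTime [true, false, true] (fun n => X n ω)
          < hitTime [false, false, true] (fun n => X n ω)} =
      ((p * (1 - p) ^ 2)⁻¹ - p⁻¹) /
        (((p ^ 2 * (1 - p))⁻¹ + p⁻¹) - 0 + (p * (1 - p) ^ 2)⁻¹ - p⁻¹)) ∧
    (p = 3/4 →
      μ {ω | hitTime [true, false, true] (fun n => X n ω)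
           < hitTime [false, false, true] (fun n => X n ω)} = 45/64) := by
  have hset : {ω | hitTime [true, false, true] (fun n => X n ω)
        < hitTime [false, false, true] (fun n => X n ω)}
      = (⋃ a : ℕ, {ω | winC a fun n => X n ω}) ∪ ⋃ a : ℕ, {ω | winD a fun n => X n ω} := by
    ext ω
    rw [Set.mem_setOf_eq, hit_iff]
    simp only [Set.mem_union, Set.mem_iUnion, Set.mem_setOf_eq, exists_or]
  have hval : μ {ω | hitTime [true, false, true] (fun n => X n ω)
        < hitTime [false, false, true] (fun n => X n ω)} = p ^ 2 + p ^ 2 * (1 - p) := by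
    rw [hset]
    exact measure_win μ p hp0 hp1 X hmeas hindep hlaw
  constructor
  · rw [hval, arith p hp0.ne' hp1]
  · intro hp
    subst hp
    rw [hval]
    exact num34
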